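/- Let G be a unipolar graph with clique split whose center H is a maximal clique of G, let G' = (V, E ∪ F) be a minimal triangulation of G, and suppose H is not a maximal clique of G'. Then there is a subset S of the vertices of exactly one peripheral clique H_j such that H ∪ S is a maximal clique H' of G', and the resulting clique split of G' with center H' is feasible with transferable set S. -/

import Mathlib

/-- A clique split of a graph `G`: the vertex set is partitioned into a center clique `H`
and peripheral cliques `P 0, …, P (k-1)` with no edges between distinct peripheral cliques. -/
structure IsCliqueSplit {V : Type*} (G : SimpleGraph V) (H : Set V) {k : ℕ}
    (P : Fin k → Set V) : Prop where
  center_clique : G.IsClique H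
  periph_clique : ∀ i, G.IsClique (P i)
  center_disj : ∀ i, Disjoint H (P i)
  periph_disj : ∀ i j, i ≠ j → Disjoint (P i) (P j)
  covers : H ∪ (⋃ i, P i) = Set.univ
  no_cross : ∀ i j, i ≠ j → ∀ u ∈ P i, ∀ v ∈ P j, ¬ G.Adj u v

/-- A graph is unipolar if it admits a clique split. -/
def Unipolar {V : Type*} (G : SimpleGraph V) : Prop :=
  ∃ (H : Set V) (k : ℕ) (P : Fin k → Set V), IsCliqueSplit G H P

/-- A graph is chordal if it contains no induced cycle on four or more vertices. -/
def Chordal {V : Type*} (G : SimpleGraph V) : Prop :=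
  ∀ n : ℕ, 4 ≤ n → IsEmpty (SimpleGraph.cycleGraph n ↪g G)

/-- `Gp` is a minimal triangulation of `G`: it is a chordal supergraph of `G` on the same
vertex set, and no chordal graph strictly between `G` and `Gp` exists (the set of fill
edges is inclusion-minimal). -/
def IsMinimalTriangulation {V : Type*} (G Gp : SimpleGraph V) : Prop :=
  G ≤ Gp ∧ Chordal Gp ∧ ∀ Gpp : SimpleGraph V, G ≤ Gpp → Gpp ≤ Gp → Chordal Gpp → Gpp = Gp

/-- `S` is a transferable set for the clique split of `Gp` with center `Hp` and peripheral
cliques `P`, with respect to the original graph `G`: `S ⊆ Hp`, for some `i` the set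
`S ∪ P i` is a clique in `G`, and vertices of `S` have no `G`-neighbors in any `P j`, `j ≠ i`. -/
def IsTransferable {V : Type*} (G : SimpleGraph V) (Hp : Set V) {k : ℕ}
    (P : Fin k → Set V) (S : Set V) : Prop :=
  S ⊆ Hp ∧ ∃ i : Fin k, G.IsClique (S ∪ P i) ∧
    ∀ j : Fin k, j ≠ i → ∀ u ∈ S, ∀ v ∈ P j, ¬ G.Adj u v

/-- A clique split of `Gp` with center `Hp` and peripheral cliques `P` is feasible
(with respect to the original graph `G`, the fill edges being the edges of `Gp` not in `G`):
(i) every fill edge either has one endpoint in `Hp` and the other in some `P j`, or both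
endpoints in `Hp`; (ii) if some fill edge has both endpoints in `Hp`, then there is a
transferable set `S ⊆ Hp` such that every such fill edge has one endpoint in `Hp − S` and
the other in `S`. -/
def IsFeasible {V : Type*} (G Gp : SimpleGraph V) (Hp : Set V) {k : ℕ}
    (P : Fin k → Set V) : Prop :=
  (∀ u v : V, Gp.Adj u v → ¬ G.Adj u v →
      (u ∈ Hp ∧ v ∈ Hp) ∨ (u ∈ Hp ∧ ∃ j : Fin k, v ∈ P j) ∨
        (v ∈ Hp ∧ ∃ j : Fin k, u ∈ P j)) ∧
  ((∃ u v : V, Gp.Adj u v ∧ ¬ G.Adj u v ∧ u ∈ Hp ∧ v ∈ Hp) →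
      ∃ S : Set V, IsTransferable G Hp P S ∧
        ∀ u v : V, Gp.Adj u v → ¬ G.Adj u v → u ∈ Hp → v ∈ Hp →
          ((u ∈ S ∧ v ∈ Hp \ S) ∨ (v ∈ S ∧ u ∈ Hp \ S)))

/-- `Hp` is a maximal clique of `Gp`. -/
def IsMaxClique {V : Type*} (Gp : SimpleGraph V) (Hp : Set V) : Prop :=
  Gp.IsClique Hp ∧ ∀ T : Set V, Gp.IsClique T → Hp ⊆ T → T = Hp

section AuxCETFS

open SimpleGraph
open Fin.NatCast Fin.CommRing

private lemma cetfs_cg_adj_iff {m : ℕ} (u v : Fin (m + 4)) :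
    (SimpleGraph.cycleGraph (m + 4)).Adj u v ↔ u = v + 1 ∨ v = u + 1 := by
  have h := @SimpleGraph.cycleGraph_adj (m + 2) u v
  refine h.trans (or_congr ?_ ?_)
  · exact sub_eq_iff_eq_add.trans (by rw [add_comm 1 v])
  · exact sub_eq_iff_eq_add.trans (by rw [add_comm 1 u])

private lemma cetfs_cast_zero {m c : ℕ} (h : (c : Fin (m + 4)) = 0) (h0 : 0 < c)
    (h4 : c < m + 4) : False := by
  have hd : (m + 4) ∣ c := Fin.natCast_eq_zero.mp h
  have := Nat.le_of_dvd h0 hd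
  omega

private lemma cetfs_m4 {m : ℕ} : ((m : Fin (m + 4)) + 4) = 0 := by
  have h := Fin.natCast_self (m + 4)
  push_cast at h
  exact h

/-- In a minimal triangulation of a graph with a clique split, there is no edge between
distinct peripheral cliques. -/
private lemma cetfs_no_cross {V : Type*} {G Gp : SimpleGraph V}
    (hmt : IsMinimalTriangulation G Gp)
    {H : Set V} {k : ℕ} {P : Fin k → Set V} (hsplit : IsCliqueSplit G H P) :
    ∀ i j : Fin k, i ≠ j → ∀ u ∈ P i, ∀ v ∈ P j, ¬ Gp.Adj u v := by
  obtain ⟨hle, hchord, hmin⟩ := hmt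
  set Z : SimpleGraph V :=
    { Adj := fun u v => Gp.Adj u v ∧ ¬ ∃ i j : Fin k, i ≠ j ∧ u ∈ P i ∧ v ∈ P j
      symm := by
        refine ⟨?_⟩
        rintro u v ⟨h, hn⟩
        exact ⟨h.symm, fun ⟨i, j, hij, hu, hv⟩ => hn ⟨j, i, hij.symm, hv, hu⟩⟩
      loopless := ⟨fun v h => Gp.loopless.irrefl v h.1⟩ } with hZdef
  have hGZ : G ≤ Z := by
    intro u v huv
    refine ⟨hle huv, ?_⟩
    rintro ⟨i, j, hij, hu, hv⟩
    exact hsplit.no_cross i j hij u hu v hv huv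
  have hZGp : Z ≤ Gp := fun _ _ h => h.1
  have mem_periph : ∀ v, v ∉ H → ∃ i, v ∈ P i := by
    intro v hv
    have hv2 : v ∈ H ∪ ⋃ i, P i := by rw [hsplit.covers]; trivial
    rcases hv2 with h | h
    · exact absurd h hv
    · exact Set.mem_iUnion.1 h
  have hZc : Chordal Z := by
    intro n hn
    constructor
    intro f
    obtain ⟨m, rfl⟩ : ∃ m, n = m + 4 := ⟨n - 4, by omega⟩
    have step : ∀ (x : Fin (m + 4)) (i : Fin k), f x ∈ P i → f (x + 1) ∉ H →
        f (x + 1) ∈ P i := by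
      intro x i hx hH
      have hadj : Z.Adj (f x) (f (x + 1)) :=
        f.map_rel_iff.2 ((cetfs_cg_adj_iff x (x + 1)).2 (Or.inr rfl))
      obtain ⟨j, hj⟩ := mem_periph _ hH
      rcases eq_or_ne i j with rfl | hne
      · exact hj
      · exact (hadj.2 ⟨i, j, hne, hx, hj⟩).elim
    have walk : ∀ (r : ℕ) (s : Fin (m + 4)) (i : Fin k), f s ∈ P i →
        (∀ t : ℕ, t ≤ r → f (s + (t : Fin (m + 4))) ∉ H) →
        f (s + (r : Fin (m + 4))) ∈ P i := by
      intro r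
      induction r with
      | zero => intro s i hs _; simpa using hs
      | succ r ih =>
        intro s i hs hav
        have h1 : f (s + (r : Fin (m + 4))) ∈ P i :=
          ih s i hs (fun t ht => hav t (le_trans ht (Nat.le_succ r)))
        have h2 : f (s + (r : Fin (m + 4)) + 1) ∉ H := by
          have h3 := hav (r + 1) le_rfl
          rwa [Nat.cast_add, Nat.cast_one, ← add_assoc] at h3
        have h4 := step _ i h1 h2
        rwa [Nat.cast_add, Nat.cast_one, ← add_assoc]
    have pairwiseH : ∀ x y : Fin (m + 4), f x ∈ H → f y ∈ H →
        x = y ∨ x = y + 1 ∨ y = x + 1 := by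
      intro x y hx hy
      rcases eq_or_ne x y with rfl | hxy
      · exact Or.inl rfl
      · right
        have hfxy : f x ≠ f y := fun h => hxy (f.injective h)
        have hz : Z.Adj (f x) (f y) := hGZ (hsplit.center_clique hx hy hfxy)
        exact (cetfs_cg_adj_iff x y).1 (f.map_rel_iff.1 hz)
    have key : ∃ (s : Fin (m + 4)) (L : ℕ),
        (∀ t : ℕ, t ≤ L → f (s + (t : Fin (m + 4))) ∉ H) ∧
        (∀ x : Fin (m + 4), f x ∉ H → (x - s).val ≤ L) := by
      by_cases hex : ∃ x, f x ∈ H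
      · obtain ⟨b0, hb0⟩ := hex
        by_cases h2 : ∃ b, f b ∈ H ∧ f (b + 1) ∈ H
        · obtain ⟨b, hb, hb1⟩ := h2
          have hBsub : ∀ x, f x ∈ H → x = b ∨ x = b + 1 := by
            intro x hx
            rcases pairwiseH x b hx hb with h | h | h
            · exact Or.inl h
            · exact Or.inr h
            · rcases pairwiseH x (b + 1) hx hb1 with h' | h' | h'
              · exact Or.inr h'
              · exfalso
                have hc : b + (1 + 1 + 1 : Fin (m + 4)) = b := by
                  nth_rewrite 2 [h]; rw [h']; ring
                have hc2 : ((3 : ℕ) : Fin (m + 4)) = 0 := by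
                  have he : ((3 : ℕ) : Fin (m + 4)) = 1 + 1 + 1 := by push_cast; ring
                  rw [he, ← add_eq_left (a := b)]; exact hc
                exact cetfs_cast_zero hc2 (by norm_num) (by omega)
              · exfalso
                have hxb : b = x := add_right_cancel h'
                have hc : x + (1 : Fin (m + 4)) = x := by rw [← h]; exact hxb
                have hc2 : ((1 : ℕ) : Fin (m + 4)) = 0 := by
                  rw [Nat.cast_one, ← add_eq_left (a := x)]; exact hc
                exact cetfs_cast_zero hc2 (by norm_num) (by omega)
          refine ⟨b + 1 + 1, m + 1, ?_, ?_⟩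
          · intro t ht hH
            rcases hBsub _ hH with h | h
            · have hc : b + ((t + 2 : ℕ) : Fin (m + 4)) = b := by
                push_cast; linear_combination h
              exact cetfs_cast_zero (by rwa [add_eq_left] at hc) (by omega) (by omega)
            · have hc : (b + 1) + ((t + 1 : ℕ) : Fin (m + 4)) = b + 1 := by
                push_cast; linear_combination h
              exact cetfs_cast_zero (by rwa [add_eq_left] at hc) (by omega) (by omega)
          · intro x hx
            have hle3 : (x - (b + 1 + 1)).val ≤ m + 3 := Fin.is_le _
            by_contra hgt
            have hps : (b + 1 + 1) + (((x - (b + 1 + 1)).val : ℕ) : Fin (m + 4)) = x := by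
              rw [Fin.cast_val_eq_self]; ring
            rcases (by omega : (x - (b + 1 + 1)).val = m + 2 ∨ (x - (b + 1 + 1)).val = m + 3)
              with hr | hr
            · apply hx
              have hxb : x = b := by
                rw [← hps, hr]; push_cast
                linear_combination (cetfs_m4 (m := m))
              rw [hxb]; exact hb
            · apply hx
              have hxb : x = b + 1 := by
                rw [← hps, hr]; push_cast
                linear_combination (cetfs_m4 (m := m))
              rw [hxb]; exact hb1
        · have hBsub : ∀ x, f x ∈ H → x = b0 := by
            intro x hx
            rcases pairwiseH x b0 hx hb0 with h | h | h
            · exact h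
            · exact absurd ⟨b0, hb0, by rw [← h]; exact hx⟩ h2
            · exact absurd ⟨x, hx, by rw [← h]; exact hb0⟩ h2
          refine ⟨b0 + 1, m + 2, ?_, ?_⟩
          · intro t ht hH
            have h := hBsub _ hH
            have hc : b0 + ((t + 1 : ℕ) : Fin (m + 4)) = b0 := by
              push_cast; linear_combination h
            exact cetfs_cast_zero (by rwa [add_eq_left] at hc) (by omega) (by omega)
          · intro x hx
            have hle3 : (x - (b0 + 1)).val ≤ m + 3 := Fin.is_le _
            by_contra hgt
            have hr : (x - (b0 + 1)).val = m + 3 := by omega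
            apply hx
            have hps : (b0 + 1) + (((x - (b0 + 1)).val : ℕ) : Fin (m + 4)) = x := by
              rw [Fin.cast_val_eq_self]; ring
            have hxb : x = b0 := by
              rw [← hps, hr]; push_cast
              linear_combination (cetfs_m4 (m := m))
            rw [hxb]; exact hb0
      · exact ⟨0, m + 3, fun t _ hH => hex ⟨_, hH⟩, fun x _ => Fin.is_le _⟩
    obtain ⟨s, L, havoid, hrange⟩ := key
    have hsH : f s ∉ H := by
      have h := havoid 0 (Nat.zero_le L)
      simpa using h
    obtain ⟨i0, hi0⟩ := mem_periph (f s) hsH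
    have main : ∀ (p : Fin (m + 4)) (i : Fin k), f p ∈ P i → i = i0 := by
      intro p i hp
      have hpH : f p ∉ H := fun h => Set.disjoint_left.mp (hsplit.center_disj i) h hp
      have hw := walk ((p - s).val) s i0 hi0
        (fun t ht => havoid t (le_trans ht (hrange p hpH)))
      have hps : s + (((p - s).val : ℕ) : Fin (m + 4)) = p := by
        rw [Fin.cast_val_eq_self]; ring
      rw [hps] at hw
      by_contra hne
      exact Set.disjoint_left.mp (hsplit.periph_disj i i0 hne) hp hw
    have hmap : ∀ {p q : Fin (m + 4)}, Gp.Adj (f p) (f q) ↔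
        (SimpleGraph.cycleGraph (m + 4)).Adj p q := by
      intro p q
      constructor
      · intro h
        by_contra hnadj
        have hnz : ¬ Z.Adj (f p) (f q) := fun hz => hnadj (f.map_rel_iff.1 hz)
        have hcross : ∃ i j : Fin k, i ≠ j ∧ f p ∈ P i ∧ f q ∈ P j := by
          by_contra hc
          exact hnz ⟨h, hc⟩
        obtain ⟨i, j, hij, hp, hq⟩ := hcross
        exact hij ((main p i hp).trans (main q j hq).symm)
      · intro h
        exact (f.map_rel_iff.2 h).1
    exact (hchord (m + 4) (by omega)).false ⟨f.toEmbedding, hmap⟩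
  have hZeq : Z = Gp := hmin Z hGZ hZGp hZc
  intro i j hij u hu v hv hadj
  rw [← hZeq] at hadj
  exact hadj.2 ⟨i, j, hij, hu, hv⟩

end AuxCETFS

/-- Let `G` be unipolar with a clique split whose center `H` is a maximal clique of `G`,
let `Gp` be a minimal triangulation of `G`, and suppose `H` is not a maximal clique of
`Gp`. Then there is a nonempty subset `S` of the vertices of exactly one peripheral
clique `P j` such that `H ∪ S` is a maximal clique of `Gp`, and the resulting clique
split of `Gp` with center `H ∪ S` (and peripheral cliques `P i \ S`) is feasible with
transferable set `S`. -/
theorem center_extends_to_feasible_split {V : Type*} (G Gp : SimpleGraph V)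
    (hmt : IsMinimalTriangulation G Gp)
    (H : Set V) {k : ℕ} (P : Fin k → Set V) (hsplit : IsCliqueSplit G H P)
    (hmax : IsMaxClique G H) (hnotmax : ¬ IsMaxClique Gp H) :
    ∃ (j : Fin k) (S : Set V), S.Nonempty ∧ S ⊆ P j ∧
      IsMaxClique Gp (H ∪ S) ∧
      IsCliqueSplit Gp (H ∪ S) (fun i => P i \ S) ∧
      IsTransferable G (H ∪ S) (fun i => P i \ S) S ∧
      (∀ u v : V, Gp.Adj u v → ¬ G.Adj u v → u ∈ H ∪ S → v ∈ H ∪ S →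
        ((u ∈ S ∧ v ∈ (H ∪ S) \ S) ∨ (v ∈ S ∧ u ∈ (H ∪ S) \ S))) := by
    classical
  have hle := hmt.1
  have hHGp : Gp.IsClique H := hsplit.center_clique.mono hle
  have mem_periph : ∀ v, v ∉ H → ∃ i, v ∈ P i := by
    intro v hv
    have hv2 : v ∈ H ∪ ⋃ i, P i := by rw [hsplit.covers]; trivial
    rcases hv2 with h | h
    · exact absurd h hv
    · exact Set.mem_iUnion.1 h
  have nocross := cetfs_no_cross hmt hsplit
  -- a maximal clique of Gp containing H, via Zorn
  obtain ⟨Hp, hHHp, hHpmax⟩ :=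
    zorn_subset_nonempty {T : Set V | Gp.IsClique T ∧ H ⊆ T} (by
      intro c hcS hchain hcne
      refine ⟨⋃₀ c, ⟨?_, ?_⟩, fun s hs => Set.subset_sUnion_of_mem hs⟩
      · intro u hu v hv huv
        obtain ⟨T1, hT1, hu1⟩ := hu
        obtain ⟨T2, hT2, hv2⟩ := hv
        rcases hchain.total hT1 hT2 with h | h
        · exact (hcS hT2).1 (h hu1) hv2 huv
        · exact (hcS hT1).1 hu1 (h hv2) huv
      · obtain ⟨T, hT⟩ := hcne
        exact (hcS hT).2.trans (Set.subset_sUnion_of_mem hT)) H ⟨hHGp, subset_rfl⟩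
  have hHpclique : Gp.IsClique Hp := hHpmax.1.1
  have hmaxprop : ∀ T, Gp.IsClique T → Hp ⊆ T → T = Hp := by
    intro T hT hsub
    exact Set.Subset.antisymm (hHpmax.2 ⟨hT, hHHp.trans hsub⟩ hsub) hsub
  have hS_ne : (Hp \ H).Nonempty := by
    rcases Set.eq_empty_or_nonempty (Hp \ H) with he | hne
    · exfalso
      apply hnotmax
      have hHp_eq : Hp = H := Set.Subset.antisymm (Set.diff_eq_empty.mp he) hHHp
      refine ⟨hHGp, fun T hT hsub => ?_⟩
      rw [← hHp_eq] at hsub ⊢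
      exact hmaxprop T hT hsub
    · exact hne
  obtain ⟨s0, hs0⟩ := hS_ne
  obtain ⟨j, hs0j⟩ := mem_periph s0 hs0.2
  have hSsub : Hp \ H ⊆ P j := by
    intro t ht
    obtain ⟨j', hj'⟩ := mem_periph t ht.2
    rcases eq_or_ne j' j with rfl | hne'
    · exact hj'
    · rcases eq_or_ne s0 t with rfl | hne
      · exact absurd hj' (Set.disjoint_left.mp (hsplit.periph_disj j j' (Ne.symm hne')) hs0j)
      · have hadj : Gp.Adj s0 t := hHpclique hs0.1 ht.1 hne
        exact absurd hadj (nocross j j' (Ne.symm hne') s0 hs0j t hj')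
  have hHS : H ∪ (Hp \ H) = Hp := Set.union_diff_cancel hHHp
  have hSdisjH : ∀ x, x ∈ H → x ∉ Hp \ H := fun x hx hx2 => hx2.2 hx
  refine ⟨j, Hp \ H, ⟨s0, hs0⟩, hSsub, ?_, ?_, ?_, ?_⟩
  · rw [hHS]
    exact ⟨hHpclique, hmaxprop⟩
  · refine ⟨?_, ?_, ?_, ?_, ?_, ?_⟩
    · rw [hHS]; exact hHpclique
    · intro i
      exact ((hsplit.periph_clique i).subset Set.diff_subset).mono hle
    · intro i
      rw [Set.disjoint_left]
      rintro x (hxH | hxS) hx2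
      · exact Set.disjoint_left.mp (hsplit.center_disj i) hxH hx2.1
      · exact hx2.2 hxS
    · intro i j' hij
      exact (hsplit.periph_disj i j' hij).mono Set.diff_subset Set.diff_subset
    · apply Set.eq_univ_of_forall
      intro x
      by_cases hxH : x ∈ H
      · exact Or.inl (Or.inl hxH)
      · obtain ⟨i, hi⟩ := mem_periph x hxH
        by_cases hxS : x ∈ Hp \ H
        · exact Or.inl (Or.inr hxS)
        · exact Or.inr (Set.mem_iUnion.2 ⟨i, hi, hxS⟩)
    · intro i j' hij u hu v hv
      exact nocross i j' hij u hu.1 v hv.1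
  · refine ⟨Set.subset_union_right, j, ?_, ?_⟩
    · have he : (Hp \ H) ∪ (P j \ (Hp \ H)) = P j := Set.union_diff_cancel hSsub
      rw [he]
      exact hsplit.periph_clique j
    · intro j' hj' u hu v hv
      exact hsplit.no_cross j j' (Ne.symm hj') u (hSsub hu) v hv.1
  · intro u v hGpuv hnG hu hv
    rcases hu with huH | huS
    · rcases hv with hvH | hvS
      · exact absurd (hsplit.center_clique huH hvH hGpuv.ne) hnG
      · exact Or.inr ⟨hvS, Or.inl huH, hSdisjH u huH⟩
    · rcases hv with hvH | hvS
      · exact Or.inl ⟨huS, Or.inl hvH, hSdisjH v hvH⟩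
      · exact absurd (hsplit.periph_clique j (hSsub huS) (hSsub hvS) hGpuv.ne) hnG
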